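/- (Strongly covariant Weyl–Heisenberg cloners are exactly the double-Bell family.) A matrix R indexed by (ZMod d)³ can be written as R_{(i,j,k),(i',j',k')} = d · Σ_l Ψ(i,j,k,l) · conj(Ψ(i',j',k',l)) for some unit vector Ψ : (ZMod d)⁴ → ℂ satisfying (U_{p,q} ⊗ U_{p,q} ⊗ conj(U_{p,q}) ⊗ conj(U_{p,q})) Ψ = Ψ for all p, q ∈ ZMod d, if and only if R = P_a for some a : ZMod d × ZMod d → ℂ with Σ_{r,s} |a_{r,s}|² = 1. -/

import Mathlib

open Matrix Kronecker BigOperators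

/-- ω = exp(2πi/d). -/
noncomputable def omega (d : ℕ) : ℂ := Complex.exp (2 * Real.pi * Complex.I / d)

/-- The Weyl–Heisenberg matrix `U_{p,q}`. -/
noncomputable def WH (d : ℕ) [NeZero d] (p q : ZMod d) : Matrix (ZMod d) (ZMod d) ℂ :=
  fun j k => if j = k + p then omega d ^ (q.val * k.val) else 0

/-- The operator `P_a` on `(ℂ^d)^⊗3` associated to the coefficients `a`:
`(P_a)_{(i,j,k),(i',j',k')} = (1/d) Σ_{r,s,r',s'} a_{rs} conj(a_{r's'})
  (U_{rs}ᴴ U_{r's'})_{i,i'} (U_{rs})_{j,k} conj((U_{r's'})_{j',k'})`. -/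
noncomputable def Pa (d : ℕ) [NeZero d] (a : ZMod d × ZMod d → ℂ) :
    Matrix (ZMod d × ZMod d × ZMod d) (ZMod d × ZMod d × ZMod d) ℂ :=
  fun x y => (d : ℂ)⁻¹ * ∑ r : ZMod d, ∑ s : ZMod d, ∑ r' : ZMod d, ∑ s' : ZMod d,
    a (r, s) * (starRingEnd ℂ) (a (r', s')) * ((WH d r s)ᴴ * WH d r' s') x.1 y.1 *
      WH d r s x.2.1 x.2.2 * (starRingEnd ℂ) (WH d r' s' y.2.1 y.2.2)

noncomputable def ee (d : ℕ) (a : ZMod d) : ℂ := omega d ^ a.val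

lemma omega_pow_d (d : ℕ) [NeZero d] : omega d ^ d = 1 := by
  rw [omega, ← Complex.exp_nat_mul]
  rw [mul_div_cancel₀]
  · exact Complex.exp_two_pi_mul_I
  · exact_mod_cast (NeZero.ne d)

lemma omega_pow_mod (d : ℕ) [NeZero d] (n : ℕ) : omega d ^ n = omega d ^ (n % d) := by
  conv_lhs => rw [← Nat.mod_add_div n d]
  rw [pow_add, pow_mul, omega_pow_d, one_pow, mul_one]

lemma ee_mul_val (d : ℕ) [NeZero d] (a b : ZMod d) :
    omega d ^ (a.val * b.val) = ee d (a * b) := by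
  rw [ee, ZMod.val_mul, ← omega_pow_mod]

lemma ee_zero (d : ℕ) [NeZero d] : ee d 0 = 1 := by simp [ee]

lemma ee_add (d : ℕ) [NeZero d] (a b : ZMod d) : ee d (a + b) = ee d a * ee d b := by
  rw [ee, ee, ee, ZMod.val_add, ← omega_pow_mod, pow_add]

lemma omega_ne_zero (d : ℕ) : omega d ≠ 0 := Complex.exp_ne_zero _

lemma ee_ne_zero (d : ℕ) (a : ZMod d) : ee d a ≠ 0 := pow_ne_zero _ (omega_ne_zero d)

lemma conj_omega (d : ℕ) : (starRingEnd ℂ) (omega d) = (omega d)⁻¹ := by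
  rw [omega, ← Complex.exp_conj, ← Complex.exp_neg]
  congr 1
  simp only [map_div₀, _root_.map_mul, Complex.conj_I, Complex.conj_ofReal, map_ofNat, map_natCast]
  ring

lemma conj_ee (d : ℕ) [NeZero d] (a : ZMod d) : (starRingEnd ℂ) (ee d a) = ee d (-a) := by
  have h : ee d (-a) * ee d a = 1 := by rw [← ee_add]; simp [ee_zero]
  rw [ee, map_pow, conj_omega, inv_pow, ← ee]
  exact (eq_inv_of_mul_eq_one_left h).symm

lemma ee_eq_one_iff (d : ℕ) [NeZero d] (t : ZMod d) : ee d t = 1 ↔ t = 0 := by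
  constructor
  · intro h
    have hprim : IsPrimitiveRoot (omega d) d := Complex.isPrimitiveRoot_exp d (NeZero.ne d)
    have := (IsPrimitiveRoot.pow_eq_one_iff_dvd hprim t.val).mp h
    have hlt : t.val < d := ZMod.val_lt t
    have h0 : t.val = 0 := Nat.eq_zero_of_dvd_of_lt this hlt
    exact (ZMod.val_eq_zero t).mp h0
  · intro h; rw [h]; exact ee_zero d

lemma sum_ee (d : ℕ) [NeZero d] (t : ZMod d) :
    ∑ s : ZMod d, ee d (s * t) = if t = 0 then (d : ℂ) else 0 := by
  have key : ∀ s : ZMod d, ee d (s * t) = ee d t ^ s.val := by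
    intro s
    rw [← ee_mul_val, ee, ← pow_mul, mul_comm t.val]
  rw [Finset.sum_congr rfl fun s _ => key s]
  have hbij : ∑ s : ZMod d, ee d t ^ s.val = ∑ i ∈ Finset.range d, ee d t ^ i := by
    apply Finset.sum_nbij' (i := fun (s : ZMod d) => s.val) (j := fun (i : ℕ) => (i : ZMod d))
    · intro s _; exact Finset.mem_range.mpr (ZMod.val_lt s)
    · intro i _; exact Finset.mem_univ _
    · intro s _; exact ZMod.natCast_rightInverse s
    · intro i hi; exact ZMod.val_cast_of_lt (Finset.mem_range.mp hi)
    · intro s _; rfl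
  rw [hbij]
  by_cases ht : t = 0
  · simp [ht, ee_zero]
  · rw [if_neg ht]
    have h1 : ee d t ≠ 1 := fun h => ht ((ee_eq_one_iff d t).mp h)
    rw [geom_sum_eq h1]
    have : ee d t ^ d = 1 := by
      rw [ee, ← pow_mul, mul_comm, pow_mul, omega_pow_d, one_pow]
    rw [this]; simp

lemma WH_apply' (d : ℕ) [NeZero d] (p q j k : ZMod d) :
    WH d p q j k = if j = k + p then ee d (q * k) else 0 := by
  rw [WH]
  split
  · rw [ee_mul_val]
  · rfl

lemma WHH_mul (d : ℕ) [NeZero d] (r s r' s' i i' : ZMod d) :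
    ((WH d r s)ᴴ * WH d r' s') i i' =
      if i + r = i' + r' then ee d (-(s * i)) * ee d (s' * i') else 0 := by
  rw [Matrix.mul_apply]
  have h : ∀ m : ZMod d, (WH d r s)ᴴ i m * WH d r' s' m i' =
      if m = i + r then (if i + r = i' + r' then ee d (-(s*i)) * ee d (s'*i') else 0) else 0 := by
    intro m
    rw [Matrix.conjTranspose_apply, WH_apply', WH_apply', Complex.star_def,
      apply_ite (starRingEnd ℂ), map_zero, conj_ee]
    by_cases h1 : m = i + r
    · subst h1
      rw [if_pos rfl, if_pos rfl]
      by_cases h2 : i + r = i' + r'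
      · rw [if_pos h2, if_pos h2]
      · rw [if_neg h2, if_neg h2, mul_zero]
    · rw [if_neg h1, if_neg h1, zero_mul]
  rw [Finset.sum_congr rfl fun m _ => h m, Finset.sum_ite_eq' Finset.univ (i + r)]
  simp

lemma WH_apply2 (d : ℕ) [NeZero d] (p q j k : ZMod d) :
    WH d p q j k = if p = j - k then ee d (q * k) else 0 := by
  rw [WH_apply']
  by_cases h : p = j - k
  · rw [if_pos h, if_pos (by rw [h]; ring)]
  · rw [if_neg h, if_neg (fun hh => h (by rw [hh]; ring))]

noncomputable def gg (d : ℕ) [NeZero d] (a : ZMod d × ZMod d → ℂ) (r t : ZMod d) : ℂ :=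
  (d : ℂ)⁻¹ * ∑ s : ZMod d, a (r, s) * ee d (s * t)

noncomputable def Psia (d : ℕ) [NeZero d] (a : ZMod d × ZMod d → ℂ) :
    ZMod d × ZMod d × ZMod d × ZMod d → ℂ :=
  fun x => if x.1 + x.2.1 = x.2.2.1 + x.2.2.2 then gg d a (x.2.1 - x.2.2.1) (x.2.2.1 - x.1) else 0

lemma Pa_apply (d : ℕ) [NeZero d] (a : ZMod d × ZMod d → ℂ) (i j k i' j' k' : ZMod d) :
    Pa d a (i, j, k) (i', j', k') =
      if i + (j - k) = i' + (j' - k') then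
        (d : ℂ) * (gg d a (j - k) (k - i) * (starRingEnd ℂ) (gg d a (j' - k') (k' - i'))) else 0 := by
  have hd : (d : ℂ) ≠ 0 := Nat.cast_ne_zero.mpr (NeZero.ne d)
  rw [Pa]
  have step : ∀ r s r' s' : ZMod d,
      a (r, s) * (starRingEnd ℂ) (a (r', s')) * ((WH d r s)ᴴ * WH d r' s') i i' *
        WH d r s j k * (starRingEnd ℂ) (WH d r' s' j' k') =
      if r = j - k then (if r' = j' - k' then
        (if i + (j - k) = i' + (j' - k') then
          (a (j - k, s) * (ee d (-(s*i)) * ee d (s*k))) *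
            ((starRingEnd ℂ) (a (j' - k', s')) * (ee d (s'*i') * ee d (-(s'*k'))))
        else 0) else 0) else 0 := by
    intro r s r' s'
    rw [WHH_mul, WH_apply2, WH_apply2, apply_ite (starRingEnd ℂ), map_zero, conj_ee]
    by_cases h1 : r = j - k
    · by_cases h2 : r' = j' - k'
      · subst h1; subst h2
        by_cases h3 : i + (j - k) = i' + (j' - k')
        · simp only [if_pos h3, eq_self_iff_true, ite_true, if_true]; ring
        · simp only [if_neg h3, eq_self_iff_true, ite_true, if_true]; ring
      · simp only [if_pos h1, if_neg h2]; ring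
    · simp only [if_neg h1]; ring
  simp only [step, Finset.sum_ite_irrel, Finset.sum_const_zero, Finset.sum_ite_eq',
    Finset.mem_univ, if_true]
  by_cases h3 : i + (j - k) = i' + (j' - k')
  · rw [if_pos h3, if_pos h3]
    have e1 : ∀ s : ZMod d, a (j - k, s) * ee d (s * (k - i)) =
        a (j - k, s) * (ee d (-(s*i)) * ee d (s*k)) := by
      intro s
      rw [← ee_add]; congr 1; ring_nf
    have e2 : ∀ s' : ZMod d, (starRingEnd ℂ) (a (j' - k', s') * ee d (s' * (k' - i'))) =
        (starRingEnd ℂ) (a (j' - k', s')) * (ee d (s'*i') * ee d (-(s'*k'))) := by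
      intro s'
      rw [_root_.map_mul, conj_ee, ← ee_add]; congr 2; ring
    rw [gg, gg, _root_.map_mul, map_inv₀, Complex.conj_natCast, map_sum]
    rw [Finset.sum_congr rfl fun s' _ => e2 s']
    rw [show (∑ s : ZMod d, a (j - k, s) * ee d (s * (k - i))) =
        ∑ s : ZMod d, a (j - k, s) * (ee d (-(s*i)) * ee d (s*k)) from
      Finset.sum_congr rfl fun s _ => e1 s]
    rw [← Finset.sum_mul_sum]
    field_simp
  · rw [if_neg h3, if_neg h3]
    simp

lemma WH_apply3 (d : ℕ) [NeZero d] (p q j k : ZMod d) :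
    WH d p q j k = if k = j - p then ee d (q * (j - p)) else 0 := by
  rw [WH_apply']
  by_cases h : k = j - p
  · rw [if_pos (by rw [h]; ring), if_pos h, h]
  · rw [if_neg h, if_neg (fun hh => h (by rw [hh]; ring))]

lemma kron_mulVec (d : ℕ) [NeZero d] (p q : ZMod d) (Ψ : ZMod d × ZMod d × ZMod d × ZMod d → ℂ)
    (i j k l : ZMod d) :
    ((WH d p q ⊗ₖ (WH d p q ⊗ₖ ((WH d p q).map (starRingEnd ℂ) ⊗ₖ
        (WH d p q).map (starRingEnd ℂ)))).mulVec Ψ) (i, j, k, l) =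
      ee d (q * (i - p)) * ee d (q * (j - p)) * ee d (-(q * (k - p))) * ee d (-(q * (l - p))) *
        Ψ (i - p, j - p, k - p, l - p) := by
  simp only [Matrix.mulVec, dotProduct, Fintype.sum_prod_type,
    Matrix.kroneckerMap_apply, Matrix.map_apply, WH_apply3, apply_ite (starRingEnd ℂ),
    map_zero, conj_ee, ite_mul, zero_mul, mul_ite, mul_zero, Finset.sum_ite_eq',
    Finset.mem_univ, if_true, Finset.sum_const_zero]
  ring

lemma Psia_apply (d : ℕ) [NeZero d] (a : ZMod d × ZMod d → ℂ) (i j k l : ZMod d) :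
    Psia d a (i, j, k, l) = if i + j = k + l then gg d a (j - k) (k - i) else 0 := rfl

lemma Psia_invariant (d : ℕ) [NeZero d] (a : ZMod d × ZMod d → ℂ) (p q : ZMod d) :
    (WH d p q ⊗ₖ (WH d p q ⊗ₖ ((WH d p q).map (starRingEnd ℂ) ⊗ₖ
      (WH d p q).map (starRingEnd ℂ)))).mulVec (Psia d a) = Psia d a := by
  funext x
  obtain ⟨i, j, k, l⟩ := x
  rw [kron_mulVec, Psia_apply, Psia_apply]
  have hc : i - p + (j - p) = k - p + (l - p) ↔ i + j = k + l := by
    rw [show i - p + (j - p) = i + j - (p + p) from by ring,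
        show k - p + (l - p) = k + l - (p + p) from by ring, sub_left_inj]
  by_cases h : i + j = k + l
  · rw [if_pos (hc.mpr h), if_pos h]
    have h2 : i - p + (j - p) = k - p + (l - p) := hc.mpr h
    have hz : q * (i - p) + q * (j - p) + -(q * (k - p)) + -(q * (l - p)) = 0 := by
      linear_combination q * h2
    have phase : ee d (q * (i - p)) * ee d (q * (j - p)) * ee d (-(q * (k - p))) *
        ee d (-(q * (l - p))) = 1 := by
      rw [← ee_add, ← ee_add, ← ee_add, hz, ee_zero]
    rw [show j - p - (k - p) = j - k from by ring, show k - p - (i - p) = k - i from by ring,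
        phase, one_mul]
  · rw [if_neg (fun hh => h (hc.mp hh)), if_neg h, mul_zero]

lemma trace_psia (d : ℕ) [NeZero d] (a : ZMod d × ZMod d → ℂ) (i j k i' j' k' : ZMod d) :
    (d : ℂ) * ∑ l : ZMod d, Psia d a (i, j, k, l) * (starRingEnd ℂ) (Psia d a (i', j', k', l)) =
      Pa d a (i, j, k) (i', j', k') := by
  rw [Pa_apply]
  have step : ∀ l : ZMod d, Psia d a (i, j, k, l) * (starRingEnd ℂ) (Psia d a (i', j', k', l)) =
      if l = i + j - k then
        (if i + (j - k) = i' + (j' - k') then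
          gg d a (j - k) (k - i) * (starRingEnd ℂ) (gg d a (j' - k') (k' - i')) else 0)
      else 0 := by
    intro l
    rw [Psia_apply, Psia_apply, apply_ite (starRingEnd ℂ), map_zero]
    by_cases h1 : l = i + j - k
    · subst h1
      rw [if_pos (show i + j = k + (i + j - k) from by ring), if_pos rfl]
      have hiff : (i' + j' = k' + (i + j - k)) ↔ (i + (j - k) = i' + (j' - k')) :=
        ⟨fun h => by linear_combination -h, fun h => by linear_combination -h⟩
      by_cases h2 : i + (j - k) = i' + (j' - k')
      · rw [if_pos (hiff.mpr h2), if_pos h2]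
      · rw [if_neg (fun hh => h2 (hiff.mp hh)), if_neg h2, mul_zero]
    · rw [if_neg (fun hh => h1 (by linear_combination -hh)), if_neg h1, zero_mul]
  rw [Finset.sum_congr rfl fun l _ => step l,
    Finset.sum_ite_eq' Finset.univ (i + j - k), if_pos (Finset.mem_univ _)]
  rw [mul_ite, mul_zero]

lemma parseval (d : ℕ) [NeZero d] (a : ZMod d × ZMod d → ℂ) (r : ZMod d) :
    ∑ t : ZMod d, gg d a r t * (starRingEnd ℂ) (gg d a r t) =
      (d : ℂ)⁻¹ * ∑ s : ZMod d, a (r, s) * (starRingEnd ℂ) (a (r, s)) := by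
  have hd : (d : ℂ) ≠ 0 := Nat.cast_ne_zero.mpr (NeZero.ne d)
  have e1 : ∀ t : ZMod d, gg d a r t * (starRingEnd ℂ) (gg d a r t) =
      (d : ℂ)⁻¹ * (d : ℂ)⁻¹ * ∑ s : ZMod d, ∑ s' : ZMod d,
        a (r, s) * (starRingEnd ℂ) (a (r, s')) * ee d ((s - s') * t) := by
    intro t
    rw [gg, _root_.map_mul, map_inv₀, Complex.conj_natCast, map_sum, mul_mul_mul_comm,
      Finset.sum_mul_sum]
    congr 1
    apply Finset.sum_congr rfl
    intro s _
    apply Finset.sum_congr rfl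
    intro s' _
    rw [_root_.map_mul, conj_ee,
      show (s - s') * t = s * t + -(s' * t) from by ring, ee_add]
    ring
  rw [Finset.sum_congr rfl fun t _ => e1 t, ← Finset.mul_sum, Finset.sum_comm]
  have e2 : ∀ s : ZMod d,
      (∑ t : ZMod d, ∑ s' : ZMod d, a (r, s) * (starRingEnd ℂ) (a (r, s')) * ee d ((s - s') * t))
        = a (r, s) * (starRingEnd ℂ) (a (r, s)) * (d : ℂ) := by
    intro s
    rw [Finset.sum_comm]
    have e3 : ∀ s' : ZMod d,
        (∑ t : ZMod d, a (r, s) * (starRingEnd ℂ) (a (r, s')) * ee d ((s - s') * t))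
          = if s' = s then a (r, s) * (starRingEnd ℂ) (a (r, s')) * (d : ℂ) else 0 := by
      intro s'
      rw [← Finset.mul_sum,
        Finset.sum_congr rfl fun t _ => show ee d ((s - s') * t) = ee d (t * (s - s')) from by
          rw [mul_comm], sum_ee]
      by_cases h : s' = s
      · rw [if_pos (by rw [h]; ring), if_pos h]
      · rw [if_neg (fun hh => h (sub_eq_zero.mp hh).symm), if_neg h, mul_zero]
    rw [Finset.sum_congr rfl fun s' _ => e3 s', Finset.sum_ite_eq' Finset.univ s,
      if_pos (Finset.mem_univ _)]
  rw [Finset.sum_congr rfl fun s _ => e2 s, ← Finset.sum_mul]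
  field_simp

lemma psia_norm (d : ℕ) [NeZero d] (a : ZMod d × ZMod d → ℂ) :
    ∑ x : ZMod d × ZMod d × ZMod d × ZMod d, Psia d a x * (starRingEnd ℂ) (Psia d a x) =
      ∑ rs : ZMod d × ZMod d, a rs * (starRingEnd ℂ) (a rs) := by
  have hd : (d : ℂ) ≠ 0 := Nat.cast_ne_zero.mpr (NeZero.ne d)
  have hexp : (∑ x : ZMod d × ZMod d × ZMod d × ZMod d,
      Psia d a x * (starRingEnd ℂ) (Psia d a x)) =
      ∑ i : ZMod d, ∑ j : ZMod d, ∑ k : ZMod d, ∑ l : ZMod d,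
        Psia d a (i, j, k, l) * (starRingEnd ℂ) (Psia d a (i, j, k, l)) := by
    simp only [Fintype.sum_prod_type]
  rw [hexp]
  have e1 : ∀ i j k : ZMod d,
      (∑ l : ZMod d, Psia d a (i, j, k, l) * (starRingEnd ℂ) (Psia d a (i, j, k, l)))
        = gg d a (j - k) (k - i) * (starRingEnd ℂ) (gg d a (j - k) (k - i)) := by
    intro i j k
    have step : ∀ l : ZMod d, Psia d a (i, j, k, l) * (starRingEnd ℂ) (Psia d a (i, j, k, l)) =
        if l = i + j - k then
          gg d a (j - k) (k - i) * (starRingEnd ℂ) (gg d a (j - k) (k - i)) else 0 := by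
      intro l
      rw [Psia_apply, apply_ite (starRingEnd ℂ), map_zero]
      by_cases h1 : l = i + j - k
      · subst h1
        rw [if_pos (show i + j = k + (i + j - k) from by ring),
          if_pos (show i + j = k + (i + j - k) from by ring),
          if_pos rfl]
      · rw [if_neg (fun hh => h1 (by linear_combination -hh)), if_neg h1, zero_mul]
    rw [Finset.sum_congr rfl fun l _ => step l, Finset.sum_ite_eq' Finset.univ (i + j - k),
      if_pos (Finset.mem_univ _)]
  rw [Finset.sum_congr rfl fun i _ => Finset.sum_congr rfl fun j _ =>
    Finset.sum_congr rfl fun k _ => e1 i j k]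
  rw [Finset.sum_congr rfl fun i (_ : i ∈ Finset.univ) => Finset.sum_comm, Finset.sum_comm]
  have perk : ∀ k : ZMod d, (∑ i : ZMod d, ∑ j : ZMod d,
      gg d a (j - k) (k - i) * (starRingEnd ℂ) (gg d a (j - k) (k - i))) =
      ∑ r : ZMod d, ∑ t : ZMod d, gg d a r t * (starRingEnd ℂ) (gg d a r t) := by
    intro k
    have hj : ∀ i : ZMod d, (∑ j : ZMod d,
        gg d a (j - k) (k - i) * (starRingEnd ℂ) (gg d a (j - k) (k - i))) =
        ∑ r : ZMod d, gg d a r (k - i) * (starRingEnd ℂ) (gg d a r (k - i)) :=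
      fun i => Fintype.sum_equiv (Equiv.subRight k) _ _ (fun j => rfl)
    rw [Finset.sum_congr rfl fun i _ => hj i, Finset.sum_comm]
    exact Finset.sum_congr rfl fun r _ =>
      Fintype.sum_equiv (Equiv.subLeft k) _ _ (fun i => rfl)
  rw [Finset.sum_congr rfl fun k _ => perk k, Finset.sum_const, Finset.card_univ, ZMod.card,
    Finset.sum_congr rfl fun r (_ : r ∈ Finset.univ) => parseval d a r, ← Finset.mul_sum,
    Fintype.sum_prod_type, nsmul_eq_mul]
  rw [← mul_assoc, mul_inv_cancel₀ hd, one_mul]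

lemma sum_abs_sq_eq {ι : Type*} [Fintype ι] (f : ι → ℂ) :
    ((∑ x : ι, ‖f x‖ ^ 2 : ℝ) : ℂ) = ∑ x : ι, f x * (starRingEnd ℂ) (f x) := by
  push_cast
  exact Finset.sum_congr rfl fun x _ => by
    rw [Complex.mul_conj, ← Complex.sq_norm]; push_cast; ring

lemma gg_inv (d : ℕ) [NeZero d] (f : ZMod d → ZMod d → ℂ) (r t : ZMod d) :
    gg d (fun rs => ∑ t' : ZMod d, f (-rs.1) t' * ee d (-(rs.2 * t'))) r t = f (-r) t := by
  have hd : (d : ℂ) ≠ 0 := Nat.cast_ne_zero.mpr (NeZero.ne d)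
  rw [gg]
  have e1 : ∀ s : ZMod d, (∑ t' : ZMod d, f (-r) t' * ee d (-(s * t'))) * ee d (s * t)
      = ∑ t' : ZMod d, f (-r) t' * ee d (s * (t - t')) := by
    intro s
    rw [Finset.sum_mul]
    apply Finset.sum_congr rfl
    intro t' _
    rw [mul_assoc, ← ee_add]
    congr 2
    ring
  rw [Finset.sum_congr rfl fun s _ => e1 s, Finset.sum_comm]
  have e2 : ∀ t' : ZMod d, (∑ s : ZMod d, f (-r) t' * ee d (s * (t - t')))
      = if t' = t then f (-r) t' * (d : ℂ) else 0 := by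
    intro t'
    rw [← Finset.mul_sum, sum_ee]
    by_cases h : t' = t
    · rw [if_pos (show t - t' = 0 from by rw [h]; ring), if_pos h]
    · rw [if_neg (fun hh => h (sub_eq_zero.mp hh).symm), if_neg h, mul_zero]
  rw [Finset.sum_congr rfl fun t' _ => e2 t', Finset.sum_ite_eq' Finset.univ t,
    if_pos (Finset.mem_univ _), ← mul_assoc, mul_comm ((d : ℂ)⁻¹), mul_assoc,
    inv_mul_cancel₀ hd, mul_one]
/-- Strongly covariant Weyl–Heisenberg cloners are exactly the double-Bell family:
`R` arises as `d·Tr₄|Ψ⟩⟨Ψ|` for a strongly covariant unit vector `Ψ` iff `R = P_a`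
for some normalized coefficients `a`. -/
theorem strongly_covariant_iff_doubleBell (d : ℕ) [NeZero d]
    (R : Matrix (ZMod d × ZMod d × ZMod d) (ZMod d × ZMod d × ZMod d) ℂ) :
    (∃ Ψ : ZMod d × ZMod d × ZMod d × ZMod d → ℂ,
      (∑ x : ZMod d × ZMod d × ZMod d × ZMod d, ‖Ψ x‖ ^ 2 = 1) ∧
      (∀ p q : ZMod d,
        (WH d p q ⊗ₖ (WH d p q ⊗ₖ ((WH d p q).map (starRingEnd ℂ) ⊗ₖ
          (WH d p q).map (starRingEnd ℂ)))).mulVec Ψ = Ψ) ∧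
      (∀ i j k i' j' k' : ZMod d,
        R (i, j, k) (i', j', k') =
          (d : ℂ) * ∑ l : ZMod d, Ψ (i, j, k, l) * (starRingEnd ℂ) (Ψ (i', j', k', l)))) ↔
      ∃ a : ZMod d × ZMod d → ℂ,
        (∑ rs : ZMod d × ZMod d, ‖a rs‖ ^ 2 = 1) ∧ R = Pa d a := by
  constructor
  · rintro ⟨Ψ, hnorm, hinv, hR⟩
    have hshift : ∀ p i j k l : ZMod d, Ψ (i - p, j - p, k - p, l - p) = Ψ (i, j, k, l) := by
      intro p i j k l
      have h := congrFun (hinv p 0) (i, j, k, l)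
      rw [kron_mulVec] at h
      simpa [zero_mul, neg_zero, ee_zero] using h
    have hsupp : ∀ i j k l : ZMod d, i + j ≠ k + l → Ψ (i, j, k, l) = 0 := by
      intro i j k l hne
      have h := congrFun (hinv 0 1) (i, j, k, l)
      rw [kron_mulVec] at h
      have hphase : ee d (1 * (i - 0)) * ee d (1 * (j - 0)) * ee d (-(1 * (k - 0))) *
          ee d (-(1 * (l - 0))) = ee d (i + j - k - l) := by
        rw [← ee_add, ← ee_add, ← ee_add]
        congr 1
        ring
      have harg : (i - 0, j - 0, k - 0, l - 0) = (i, j, k, l) := by simp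
      rw [hphase, harg] at h
      have hm : i + j - k - l ≠ 0 := fun h0 => hne (by linear_combination h0)
      have h1 : ee d (i + j - k - l) ≠ 1 := fun he => hm ((ee_eq_one_iff d _).mp he)
      have h2 : (ee d (i + j - k - l) - 1) * Ψ (i, j, k, l) = 0 := by linear_combination h
      exact (mul_eq_zero.mp h2).resolve_left (sub_ne_zero.mpr h1)
    set a : ZMod d × ZMod d → ℂ :=
      fun rs => ∑ t' : ZMod d, Ψ (-rs.1, t', -rs.1 + t', 0) * ee d (-(rs.2 * t')) with ha
    have hgg : ∀ r t : ZMod d, gg d a r t = Ψ (-r, t, -r + t, 0) :=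
      fun r t => gg_inv d (fun u v => Ψ (u, v, u + v, 0)) r t
    have hPsi : Psia d a = Ψ := by
      funext x
      obtain ⟨i, j, k, l⟩ := x
      rw [Psia_apply]
      by_cases h : i + j = k + l
      · rw [if_pos h, hgg]
        have e1 : -(j - k) = i - l := by linear_combination -h
        have e2 : k - i = j - l := by linear_combination -h
        rw [e1, e2]
        have e3 : i - l + (j - l) = k - l := by linear_combination h
        rw [e3, show (0 : ZMod d) = l - l from (sub_self l).symm]
        exact hshift l i j k l
      · rw [if_neg h]
        exact (hsupp i j k l h).symm
    refine ⟨a, ?_, ?_⟩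
    · have hc : ((∑ rs : ZMod d × ZMod d, ‖a rs‖ ^ 2 : ℝ) : ℂ) =
          ((∑ x : ZMod d × ZMod d × ZMod d × ZMod d, ‖Ψ x‖ ^ 2 : ℝ) : ℂ) := by
        rw [sum_abs_sq_eq, sum_abs_sq_eq, ← psia_norm d a, hPsi]
      rw [hnorm] at hc
      exact_mod_cast hc
    · funext x y
      obtain ⟨i, j, k⟩ := x
      obtain ⟨i', j', k'⟩ := y
      rw [hR i j k i' j' k', ← hPsi]
      exact trace_psia d a i j k i' j' k'
  · rintro ⟨a, hnorm, hR⟩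
    refine ⟨Psia d a, ?_, fun p q => Psia_invariant d a p q, ?_⟩
    · have hc : ((∑ x : ZMod d × ZMod d × ZMod d × ZMod d,
          ‖Psia d a x‖ ^ 2 : ℝ) : ℂ) =
          ((∑ rs : ZMod d × ZMod d, ‖a rs‖ ^ 2 : ℝ) : ℂ) := by
        rw [sum_abs_sq_eq, sum_abs_sq_eq, psia_norm]
      rw [hnorm] at hc
      exact_mod_cast hc
    · intro i j k i' j' k'
      rw [hR]
      exact (trace_psia d a i j k i' j' k').symm
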